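/- If C ⊆ V is independent in G, then the mode polytope M(G,C) is full-dimensional in the probability simplex, i.e., dim M(G,C) = |V| - 1. -/

import Mathlib

/-- The polytope of `C`-modes of a graph `G`, inside the probability simplex. -/
def modePolytope {V : Type*} [Fintype V] (G : SimpleGraph V) (C : Set V) :
    Set (V → ℝ) :=
  {p | (∀ v, 0 ≤ p v) ∧ (∑ v, p v = 1) ∧ ∀ x ∈ C, ∀ y, G.Adj x y → p y ≤ p x}

/-- The "total sum" linear functional on `V → ℝ`. -/
noncomputable def sumFun (V : Type*) [Fintype V] : (V → ℝ) →ₗ[ℝ] ℝ where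
  toFun f := ∑ v, f v
  map_add' f g := by simp [Finset.sum_add_distrib]
  map_smul' c f := by simp [Finset.mul_sum]

lemma sumFun_ker_finrank (V : Type*) [Fintype V] [Nonempty V] :
    Module.finrank ℝ (LinearMap.ker (sumFun V)) = Fintype.card V - 1 := by
  have hsurj : LinearMap.range (sumFun V) = ⊤ := by
    rw [LinearMap.range_eq_top]
    intro r
    refine ⟨fun _ => r / Fintype.card V, ?_⟩
    have hc : (0:ℝ) < Fintype.card V := by
      exact_mod_cast Fintype.card_pos
    simp [sumFun, Finset.sum_const, Finset.card_univ]
    field_simp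
  have h := LinearMap.finrank_range_add_finrank_ker (sumFun V)
  rw [hsurj] at h
  simp only [finrank_top, Module.finrank_self] at h
  rw [Module.finrank_fintype_fun_eq_card] at h
  omega

/-- For an independent set `C`, the mode polytope `M(G,C)` is full-dimensional in the
probability simplex: its dimension is `|V| - 1`. -/
theorem modePolytope_full_dim {V : Type*} [Fintype V] [Nonempty V]
    (G : SimpleGraph V) (C : Set V)
    (hInd : ∀ x ∈ C, ∀ y ∈ C, ¬ G.Adj x y) :
    Module.finrank ℝ (affineSpan ℝ (modePolytope G C)).direction
      = Fintype.card V - 1 := by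
  classical
  rw [direction_affineSpan]
  -- the weight function, base point and perturbation size
  set w : V → ℝ := fun v => if v ∈ C then 2 else 1 with hw
  have hw1 : ∀ v, (1:ℝ) ≤ w v := by
    intro v; by_cases h : v ∈ C <;> simp [hw, h]
  set S : ℝ := ∑ v, w v with hS
  have hS0 : (0:ℝ) < S := by
    apply Finset.sum_pos (fun v _ => lt_of_lt_of_le one_pos (hw1 v))
    exact Finset.univ_nonempty
  set p : V → ℝ := fun v => w v / S with hp
  set ε : ℝ := 1 / (2 * S) with hε
  have hε0 : 0 < ε := by positivity
  have hpsum : ∑ v, p v = 1 := by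
    rw [hp]
    rw [← Finset.sum_div]
    field_simp
    exact hS.symm
  have hpC : ∀ x ∈ C, p x = 2 / S := by intro x hx; simp [hp, hw, hx]
  have hpNC : ∀ x, x ∉ C → p x = 1 / S := by intro x hx; simp [hp, hw, hx]
  have hplb : ∀ v, 1 / S ≤ p v := by
    intro v
    simp only [hp]
    gcongr
    exact hw1 v
  have hpub : ∀ v, p v ≤ 2 / S := by
    intro v
    simp only [hp]
    gcongr
    by_cases h : v ∈ C <;> simp [hw, h]
  -- membership of the base point
  have hpmem : p ∈ modePolytope G C := by
    refine ⟨fun v => le_trans (by positivity) (hplb v), hpsum, ?_⟩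
    intro x hx y hxy
    rw [hpC x hx]
    exact (hpub y).trans le_rfl
  have h2e : 2 * ε = 1 / S := by rw [hε]; field_simp
  -- membership of perturbed points
  have hqmem : ∀ v v0 : V,
      (p + ε • (Pi.single v (1:ℝ) - Pi.single v0 (1:ℝ))) ∈ modePolytope G C := by
    intro v v0
    set d : V → ℝ := Pi.single v (1:ℝ) - Pi.single v0 (1:ℝ) with hd
    have hbound : ∀ u, |d u| ≤ 1 := by
      intro u
      simp only [hd, Pi.sub_apply, Pi.single_apply]
      split_ifs <;> norm_num
    refine ⟨?_, ?_, ?_⟩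
    · intro u
      have h1 : -(1:ℝ) ≤ d u := neg_le_of_abs_le (hbound u)
      have h2 := hplb u
      have h3 : ε * (-1) ≤ ε * d u := mul_le_mul_of_nonneg_left h1 hε0.le
      simp only [Pi.add_apply, Pi.smul_apply, smul_eq_mul]
      linarith
    · have hds : ∑ u, d u = 0 := by
        simp [hd, Finset.sum_sub_distrib, Finset.sum_pi_single]
      have : ∑ u, (p + ε • d) u = (∑ u, p u) + ε * ∑ u, d u := by
        simp [Finset.sum_add_distrib, Finset.mul_sum]
      rw [this, hpsum, hds]
      ring
    · intro x hx y hxy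
      have hyC : y ∉ C := fun hy => hInd x hx y hy hxy
      have hdy : d y ≤ 1 := le_of_abs_le (hbound y)
      have hdx : -(1:ℝ) ≤ d x := neg_le_of_abs_le (hbound x)
      have h3 : ε * (-1) ≤ ε * d x := mul_le_mul_of_nonneg_left hdx hε0.le
      have h4 : ε * d y ≤ ε * 1 := mul_le_mul_of_nonneg_left hdy hε0.le
      simp only [Pi.add_apply, Pi.smul_apply, smul_eq_mul]
      rw [hpC x hx, hpNC y hyC]
      have h2S : 2 / S = 2 * (1 / S) := by ring
      linarith
  -- the vector span is exactly the sum-zero hyperplane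
  have hvs : vectorSpan ℝ (modePolytope G C) = LinearMap.ker (sumFun V) := by
    apply le_antisymm
    · rw [vectorSpan_def, Submodule.span_le]
      rintro _ ⟨a, ha, b, hb, rfl⟩
      simp only [SetLike.mem_coe, LinearMap.mem_ker, vsub_eq_sub]
      show ∑ u, (a - b) u = 0
      simp [Finset.sum_sub_distrib, ha.2.1, hb.2.1]
    · intro f hf
      obtain ⟨v0⟩ := ‹Nonempty V›
      have hgen : ∀ v : V,
          (Pi.single v (1:ℝ) - Pi.single v0 (1:ℝ)) ∈ vectorSpan ℝ (modePolytope G C) := by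
        intro v
        have hmem := vsub_mem_vectorSpan ℝ (hqmem v v0) hpmem
        have he : (p + ε • (Pi.single v (1:ℝ) - Pi.single v0 (1:ℝ))) -ᵥ p
            = ε • (Pi.single v (1:ℝ) - Pi.single v0 (1:ℝ)) := by
          simp [vsub_eq_sub]
        rw [he] at hmem
        have h5 := Submodule.smul_mem _ ε⁻¹ hmem
        rwa [smul_smul, inv_mul_cancel₀ hε0.ne', one_smul] at h5
      have hsum : ∑ v, f v = 0 := hf
      have hf' : f = ∑ v, f v • (Pi.single v (1:ℝ) - Pi.single v0 (1:ℝ)) := by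
        funext u
        simp only [Finset.sum_apply, Pi.smul_apply, Pi.sub_apply, smul_eq_mul,
          Pi.single_apply, mul_sub, mul_ite, mul_one, mul_zero]
        rw [Finset.sum_sub_distrib, Finset.sum_ite_eq]
        by_cases h : u = v0 <;> simp [h, hsum]
      rw [hf']
      exact Submodule.sum_mem _ fun v _ => Submodule.smul_mem _ _ (hgen v)
  rw [hvs, sumFun_ker_finrank]
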